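/- (Semidefinite representability of the peak power.) Let N ≥ 1, let q_k ∈ ℂ for k ∈ {−2N, …, 2N} satisfy the symmetry q_{−k} = conj(q_k) and q_0 = 0, and define the trigonometric polynomial q(z) = ∑_{k=−2N}^{2N} q_k z^{−k} (real-valued on the unit circle). Let θ ∈ ℝ. Then θ ≥ max_{|z|=1} |q(z)| if and only if there exist positive semidefinite Hermitian matrices Q_1, Q_2 ∈ ℂ^{(2N+1)×(2N+1)} such that θ = tr(Λ_0 Q_1), q_k = tr(Λ_k Q_1) for all k ≠ 0, θ = tr(Λ_0 Q_2), and −q_k = tr(Λ_k Q_2) for all k ≠ 0, where Λ_k is the (2N+1)×(2N+1) elementary Toeplitz matrix with (Λ_k)_{ij} = 1 if j − i = k and 0 otherwise. -/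

import Mathlib

open Matrix BigOperators ComplexOrder

/-- The elementary Toeplitz matrix `Λ_k` of size `(n+1) × (n+1)`:
`(Λ_k)_{ij} = 1` if `j - i = k` and `0` otherwise. -/
def elemToeplitz (n : ℕ) (k : ℤ) : Matrix (Fin (n + 1)) (Fin (n + 1)) ℂ :=
  Matrix.of fun i j => if (j : ℤ) - (i : ℤ) = k then 1 else 0

open Polynomial Complex


lemma circle_inf : {z : ℂ | ‖z‖ = 1}.Infinite := by
  apply Set.infinite_of_injective_forall_mem (f := fun n : ℕ => Complex.exp (Complex.I * (1/(n+1))))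
  case hi =>
    intro a b hab
    simp only [Complex.exp_eq_exp_iff_exists_int] at hab
    obtain ⟨n, hn⟩ := hab
    have hI : (Complex.I : ℂ) ≠ 0 := Complex.I_ne_zero
    have h1 : (1:ℂ)/(a+1) = 1/(b+1) + n * (2*Real.pi) := by
      have := hn
      rw [mul_comm (n:ℂ) (2*Real.pi*Complex.I)] at this
      have h2 : Complex.I * (1/(a+1)) = Complex.I * (1/(b+1) + n * (2*Real.pi)) := by
        rw [this]; ring
      exact mul_left_cancel₀ hI h2
    have h2 : (1:ℝ)/(a+1) = 1/(b+1) + n * (2*Real.pi) := by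
      have h1' : (((1:ℝ)/(a+1) : ℝ) : ℂ) = ((1/(b+1) + n*(2*Real.pi) : ℝ) : ℂ) := by
        push_cast
        exact h1
      exact Complex.ofReal_inj.mp h1'
    have hn0 : n = 0 := by
      rcases lt_trichotomy n 0 with h|h|h
      · exfalso
        have hpi : (2:ℝ)*Real.pi > 6 := by
          have := Real.pi_gt_three; linarith
        have hb : (1:ℝ)/(b+1) ≤ 1 := by
          rw [div_le_one (by positivity)]; simp
        have ha : (0:ℝ) < 1/(a+1) := by positivity
        have hn1 : n ≤ -1 := by omega
        have : (n:ℝ) ≤ -1 := by exact_mod_cast hn1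
        nlinarith [Real.pi_pos]
      · exact h
      · exfalso
        have hpi : (2:ℝ)*Real.pi > 6 := by
          have := Real.pi_gt_three; linarith
        have hb : (0:ℝ) < 1/(b+1) := by positivity
        have ha : (1:ℝ)/(a+1) ≤ 1 := by
          rw [div_le_one (by positivity)]; simp
        have : (1:ℝ) ≤ (n:ℝ) := by exact_mod_cast h
        nlinarith [Real.pi_pos]
    rw [hn0] at h2
    push_cast at h2
    have ha : (0:ℝ) < a+1 := by positivity
    have hb : (0:ℝ) < b+1 := by positivity
    field_simp at h2
    exact_mod_cast (by linarith : (a:ℝ) = b)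
  case hf =>
    intro n
    simp only [Set.mem_setOf_eq, Complex.norm_exp]
    rw [show Complex.I * (1/((n:ℂ)+1)) = (1/((n:ℝ)+1) : ℝ) * Complex.I by push_cast; ring]
    simp [Complex.exp_ofReal_mul_I_re]

lemma circle_mul_conj {z : ℂ} (hz : ‖z‖ = 1) : z * (starRingEnd ℂ) z = 1 := by
  rw [Complex.mul_conj]
  norm_cast
  rw [Complex.normSq_eq_norm_sq]
  simp [hz]

lemma circle_ne_zero {z : ℂ} (hz : ‖z‖ = 1) : z ≠ 0 := by
  intro h; rw [h] at hz; simp at hz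

lemma circle_conj_eq_inv {z : ℂ} (hz : ‖z‖ = 1) : (starRingEnd ℂ) z = z⁻¹ := by
  field_simp [circle_ne_zero hz]
  rw [mul_comm]
  exact circle_mul_conj hz

lemma poly_eq_of_circle {p q : Polynomial ℂ} (s : Set ℂ) (hs : s.Finite)
    (h : ∀ z : ℂ, ‖z‖ = 1 → z ∉ s → p.eval z = q.eval z) : p = q := by
  apply Polynomial.eq_of_infinite_eval_eq
  exact (circle_inf.diff hs).mono (fun z hz => h z hz.1 hz.2)

/-- `starPoly m P` has coefficients `conj (P.coeff (m - j))` for `j ≤ m`. -/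
noncomputable def starPoly (m : ℕ) (P : Polynomial ℂ) : Polynomial ℂ :=
  ∑ j ∈ Finset.range (m+1), Polynomial.C ((starRingEnd ℂ) (P.coeff (m - j))) * Polynomial.X ^ j

lemma starPoly_coeff (m : ℕ) (P : Polynomial ℂ) {j : ℕ} (hj : j ≤ m) :
    (starPoly m P).coeff j = (starRingEnd ℂ) (P.coeff (m - j)) := by
  unfold starPoly
  rw [Polynomial.finset_sum_coeff]
  rw [Finset.sum_eq_single j]
  · simp
  · intro b _ hb
    simp [Polynomial.coeff_C_mul, Polynomial.coeff_X_pow, hb, Ne.symm hb]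
  · intro hj'
    exfalso; exact hj' (Finset.mem_range.mpr (Nat.lt_succ_of_le hj))

lemma starPoly_natDegree_le (m : ℕ) (P : Polynomial ℂ) : (starPoly m P).natDegree ≤ m := by
  unfold starPoly
  apply Polynomial.natDegree_sum_le_of_forall_le
  intro j hj
  refine le_trans (Polynomial.natDegree_C_mul_le _ _) ?_
  simpa using Nat.lt_succ_iff.mp (Finset.mem_range.mp hj)

lemma eval_eq_sum_range_zpow {P : Polynomial ℂ} {m : ℕ} (hdeg : P.natDegree ≤ m) (z : ℂ) :
    P.eval z = ∑ i ∈ Finset.range (m+1), P.coeff i * z ^ i :=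
  Polynomial.eval_eq_sum_range' (Nat.lt_succ_of_le hdeg) z

lemma starPoly_eval {P : Polynomial ℂ} {m : ℕ} (hdeg : P.natDegree ≤ m) {z : ℂ}
    (hz : ‖z‖ = 1) : (starPoly m P).eval z = z ^ m * (starRingEnd ℂ) (P.eval z) := by
  unfold starPoly
  rw [Polynomial.eval_finset_sum]
  rw [eval_eq_sum_range_zpow hdeg, _root_.map_sum, Finset.mul_sum]
  rw [← Finset.sum_range_reflect]
  apply Finset.sum_congr rfl
  intro j hj
  have hj' : j ≤ m := Nat.lt_succ_iff.mp (Finset.mem_range.mp hj)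
  simp only [Polynomial.eval_mul, Polynomial.eval_C, Polynomial.eval_pow, Polynomial.eval_X,
    _root_.map_mul, _root_.map_pow]
  have e1 : m + 1 - 1 - j = m - j := by omega
  rw [e1, Nat.sub_sub_self hj']
  have h1 : z ^ m = z ^ (m - j) * z ^ j := by rw [← pow_add]; congr 1; omega
  have h2 : z ^ j * ((starRingEnd ℂ) z) ^ j = 1 := by
    rw [← mul_pow, circle_mul_conj hz, one_pow]
  rw [h1, show z ^ (m-j) * z ^ j * ((starRingEnd ℂ) (P.coeff j) * ((starRingEnd ℂ) z) ^ j)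
      = (z ^ j * ((starRingEnd ℂ) z) ^ j) * (z ^ (m-j) * (starRingEnd ℂ) (P.coeff j)) from by ring,
    h2]
  ring

lemma deriv_zero_of_circle_root (m : ℕ) (P : Polynomial ℂ)
    (hpos : ∀ z : ℂ, ‖z‖ = 1 → ∃ r : ℝ, 0 ≤ r ∧ P.eval z = (r : ℂ) * z ^ m)
    {ρ : ℂ} (hρ : ‖ρ‖ = 1) (hroot : P.eval ρ = 0) : P.derivative.eval ρ = 0 := by
  set t₀ : ℝ := ρ.arg with ht₀
  have hexp : Complex.exp ((t₀ : ℂ) * Complex.I) = ρ := by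
    have := Complex.norm_mul_exp_arg_mul_I ρ
    rwa [show ((‖ρ‖ : ℝ) : ℂ) = 1 by rw [hρ]; norm_num, one_mul] at this
  set c : ℂ := -(m : ℂ) * Complex.I with hc
  set G : ℂ → ℂ := fun w => P.eval (Complex.exp (w * Complex.I)) * Complex.exp (w * c) with hG
  -- G is real and nonnegative on ℝ
  have hcirc : ∀ t : ℝ, ‖Complex.exp ((t:ℂ) * Complex.I)‖ = 1 := by
    intro t
    rw [Complex.norm_exp]
    simp
  have hval : ∀ t : ℝ, ∃ r : ℝ, 0 ≤ r ∧ G t = (r : ℂ) := by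
    intro t
    obtain ⟨r, hr0, hr⟩ := hpos _ (hcirc t)
    refine ⟨r, hr0, ?_⟩
    rw [hG]
    simp only
    rw [hr, ← Complex.exp_nat_mul]
    rw [mul_assoc, ← Complex.exp_add]
    rw [show (m : ℂ) * ((t:ℂ) * Complex.I) + (t:ℂ) * c = 0 by rw [hc]; ring]
    simp
  -- derivative of G at t₀
  have hinner : HasDerivAt (fun w : ℂ => Complex.exp (w * Complex.I)) (ρ * Complex.I) (t₀ : ℂ) := by
    have h1 : HasDerivAt (fun w : ℂ => w * Complex.I) Complex.I (t₀ : ℂ) :=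
      hasDerivAt_mul_const Complex.I
    have := h1.cexp
    rwa [hexp] at this
  have hpoly : HasDerivAt (fun w : ℂ => P.eval (Complex.exp (w * Complex.I)))
      (P.derivative.eval ρ * (ρ * Complex.I)) (t₀ : ℂ) := by
    have := (Polynomial.hasDerivAt P (Complex.exp ((t₀:ℂ) * Complex.I))).comp (t₀ : ℂ) hinner
    rwa [hexp] at this
  have hexp2 : HasDerivAt (fun w : ℂ => Complex.exp (w * c))
      (Complex.exp ((t₀:ℂ) * c) * c) (t₀ : ℂ) := (hasDerivAt_mul_const c).cexp
  set E : ℂ := Complex.exp ((t₀:ℂ) * c) with hE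
  set D : ℂ := P.derivative.eval ρ * (ρ * Complex.I) * E + P.eval ρ * (E * c) with hD
  have hGd : HasDerivAt G D (t₀ : ℂ) := by
    have := hpoly.mul hexp2
    rw [hexp] at this
    exact this
  -- real part has a local min at t₀
  have hf : HasDerivAt (fun t : ℝ => (G t).re) D.re t₀ := hGd.real_of_complex
  have hGt₀ : G (t₀ : ℂ) = 0 := by
    rw [hG]; simp only; rw [hexp, hroot, zero_mul]
  have hmin : IsLocalMin (fun t : ℝ => (G t).re) t₀ := by
    apply Filter.Eventually.of_forall
    intro t
    obtain ⟨r, hr0, hr⟩ := hval t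
    simp only [hGt₀, hr]
    simpa using hr0
  have hDre : D.re = 0 := hmin.hasDerivAt_eq_zero hf
  -- imaginary part is identically zero
  have hf2 : HasDerivAt (fun t : ℝ => ((-Complex.I) * G t).re) ((-Complex.I) * D).re t₀ :=
    (hGd.const_mul (-Complex.I)).real_of_complex
  have hzero : (fun t : ℝ => ((-Complex.I) * G t).re) = fun _ => (0 : ℝ) := by
    funext t
    obtain ⟨r, hr0, hr⟩ := hval t
    rw [hr]
    simp
  have hDim : ((-Complex.I) * D).re = 0 := by
    have h0 : HasDerivAt (fun _ : ℝ => (0:ℝ)) 0 t₀ := hasDerivAt_const t₀ 0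
    rw [hzero] at hf2
    exact hf2.unique h0
  have hD0 : D = 0 := by
    have : D.im = 0 := by
      simpa using hDim
    exact Complex.ext hDre this
  -- conclude
  rw [hD, hroot, zero_mul, add_zero] at hD0
  have hρ0 : ρ ≠ 0 := circle_ne_zero hρ
  have hE0 : E ≠ 0 := Complex.exp_ne_zero _
  have := mul_eq_zero.mp hD0
  rcases this with h | h
  · rcases mul_eq_zero.mp h with h' | h'
    · exact h'
    · exact absurd h' (mul_ne_zero hρ0 Complex.I_ne_zero)
  · exact absurd h hE0

lemma starPoly_root (m : ℕ) (P : Polynomial ℂ) (hdeg : P.natDegree ≤ m) {w : ℂ} (hw : w ≠ 0)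
    (hroot : P.eval w = 0) : (starPoly m P).eval (((starRingEnd ℂ) w)⁻¹) = 0 := by
  set u : ℂ := ((starRingEnd ℂ) w)⁻¹ with hu
  have hkey : w ^ m * (starRingEnd ℂ) ((starPoly m P).eval u) = P.eval w := by
    unfold starPoly
    rw [Polynomial.eval_finset_sum, _root_.map_sum, Finset.mul_sum]
    rw [eval_eq_sum_range_zpow hdeg w, ← Finset.sum_range_reflect]
    apply Finset.sum_congr rfl
    intro j hj
    have hj' : j ≤ m := Nat.lt_succ_iff.mp (Finset.mem_range.mp hj)
    simp only [Polynomial.eval_mul, Polynomial.eval_C, Polynomial.eval_pow, Polynomial.eval_X,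
      _root_.map_mul, _root_.map_pow, RingHomCompTriple.comp_apply, Complex.conj_conj]
    rw [_root_.map_inv₀, Complex.conj_conj]
    have e1 : m + 1 - 1 - j = m - j := by omega
    rw [e1, Nat.sub_sub_self hj']
    have h1 : w ^ m = w ^ (m - j) * w ^ j := by rw [← pow_add]; congr 1; omega
    have h2 : w ^ (m - j) * (w⁻¹) ^ (m - j) = 1 := by
      rw [← mul_pow, mul_inv_cancel₀ hw, one_pow]
    calc w ^ m * ((RingHom.id ℂ) (P.coeff j) * (w⁻¹) ^ (m - j))
        = (w ^ (m - j) * (w⁻¹) ^ (m - j)) * (P.coeff j * w ^ j) := by rw [h1]; simp; ring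
      _ = P.coeff j * w ^ j := by rw [h2, one_mul]
  rw [hroot] at hkey
  have hwm : w ^ m ≠ 0 := pow_ne_zero _ hw
  have := (mul_eq_zero.mp hkey).resolve_left hwm
  have h2 := congrArg (starRingEnd ℂ) this
  rwa [Complex.conj_conj, _root_.map_zero] at h2

open Polynomial in
lemma fr (n : ℕ) (P : Polynomial ℂ) (hdeg : P.natDegree ≤ 2 * n)
    (hpos : ∀ z : ℂ, ‖z‖ = 1 → ∃ r : ℝ, 0 ≤ r ∧ P.eval z = (r : ℂ) * z ^ n) :
    ∃ h : Polynomial ℂ, h.natDegree ≤ n ∧ ∀ z : ℂ, ‖z‖ = 1 →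
      P.eval z = z ^ n * ((h.eval z) * (starRingEnd ℂ) (h.eval z)) := by
  induction n generalizing P with
  | zero =>
    obtain ⟨c, hc⟩ := Polynomial.natDegree_eq_zero.mp (Nat.le_zero.mp (by simpa using hdeg))
    obtain ⟨r, hr0, hr⟩ := hpos 1 (by norm_num)
    have hcr : c = (r : ℂ) := by
      have : P.eval 1 = c := by rw [← hc]; simp
      rw [this] at hr; simpa using hr
    refine ⟨Polynomial.C ((Real.sqrt r : ℝ) : ℂ), by simp, ?_⟩
    intro z hz
    have : P.eval z = c := by rw [← hc]; simp
    rw [this, hcr]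
    simp only [Polynomial.eval_C, pow_zero, one_mul, Complex.conj_ofReal]
    rw [← Complex.ofReal_mul, Real.mul_self_sqrt hr0]
  | succ n ih =>
    by_cases hP0 : P = 0
    · exact ⟨0, by simp, by simp [hP0]⟩
    have hdeg' : P.natDegree ≤ 2 * (n + 1) := hdeg
    have hsym : starPoly (2 * (n + 1)) P = P := by
      apply poly_eq_of_circle ∅ Set.finite_empty
      intro z hz _
      obtain ⟨r, hr0, hr⟩ := hpos z hz
      rw [starPoly_eval hdeg' hz, hr, _root_.map_mul, _root_.map_pow, Complex.conj_ofReal]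
      have h2 : z ^ (n+1) * ((starRingEnd ℂ) z) ^ (n+1) = 1 := by
        rw [← mul_pow, circle_mul_conj hz, one_pow]
      calc z ^ (2*(n+1)) * ((r:ℂ) * ((starRingEnd ℂ) z) ^ (n+1))
          = (z ^ (n+1) * ((starRingEnd ℂ) z) ^ (n+1)) * ((r:ℂ) * z ^ (n+1)) := by
            rw [show 2*(n+1) = (n+1)+(n+1) by ring, pow_add]; ring
        _ = (r:ℂ) * z ^ (n+1) := by rw [h2, one_mul]
    by_cases h0 : P.coeff 0 = 0
    · -- X divides P
      obtain ⟨P₁, hP₁⟩ := Polynomial.X_dvd_iff.mpr h0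
      have htop : P.coeff (2*(n+1)) = 0 := by
        have hco := starPoly_coeff (2*(n+1)) P (le_refl (2*(n+1)))
        rw [hsym] at hco
        rw [hco, Nat.sub_self, h0, _root_.map_zero]
      have hndne : P.natDegree ≠ 2*(n+1) := by
        intro h
        exact hP0 (Polynomial.leadingCoeff_eq_zero.mp
          (by rw [Polynomial.leadingCoeff, h]; exact htop))
      have hP₁0 : P₁ ≠ 0 := by
        intro h; exact hP0 (by rw [hP₁, h, mul_zero])
      have hdegP₁ : P₁.natDegree ≤ 2*n := by
        have hX : (Polynomial.X : Polynomial ℂ) ≠ 0 := Polynomial.X_ne_zero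
        have := Polynomial.natDegree_mul hX hP₁0
        rw [← hP₁] at this
        simp only [Polynomial.natDegree_X] at this
        omega
      have hposP₁ : ∀ z : ℂ, ‖z‖ = 1 → ∃ r : ℝ, 0 ≤ r ∧ P₁.eval z = (r:ℂ) * z ^ n := by
        intro z hz
        obtain ⟨r, hr0, hr⟩ := hpos z hz
        refine ⟨r, hr0, ?_⟩
        have hev : P.eval z = z * P₁.eval z := by rw [hP₁]; simp
        rw [hev] at hr
        have hz0 : z ≠ 0 := circle_ne_zero hz
        apply mul_left_cancel₀ hz0
        rw [hr, pow_succ]; ring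
      obtain ⟨h₁, hdegh₁, hh₁⟩ := ih P₁ hdegP₁ hposP₁
      refine ⟨h₁, le_trans hdegh₁ (Nat.le_succ n), ?_⟩
      intro z hz
      have hev : P.eval z = z * P₁.eval z := by rw [hP₁]; simp
      rw [hev, hh₁ z hz, pow_succ]
      ring
    · -- coeff 0 ≠ 0 : find a root and strip a quadratic factor
      have hnd : 1 ≤ P.natDegree := by
        by_contra hcon
        push_neg at hcon
        have h00 : P.natDegree = 0 := by omega
        obtain ⟨c, hc⟩ := Polynomial.natDegree_eq_zero.mp h00
        obtain ⟨r₁, hr₁0, hr₁⟩ := hpos 1 (by norm_num)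
        have hc1 : c = (r₁ : ℂ) := by
          have : P.eval 1 = c := by rw [← hc]; simp
          rw [this] at hr₁; simpa using hr₁
        set ζ : ℂ := Complex.exp (((Real.pi/(n+1) : ℝ) : ℂ) * Complex.I) with hζ
        have hζc : ‖ζ‖ = 1 := by
          rw [hζ, Complex.norm_exp_ofReal_mul_I]
        have hζm : ζ ^ (n+1) = -1 := by
          rw [hζ, ← Complex.exp_nat_mul]
          rw [show ((n+1 : ℕ) : ℂ) * (((Real.pi/(n+1) : ℝ) : ℂ) * Complex.I)
              = (Real.pi : ℂ) * Complex.I by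
            have hn0 : ((n:ℂ) + 1) ≠ 0 := by
              have h1 : ((n+1 : ℕ) : ℂ) ≠ 0 := Nat.cast_ne_zero.mpr (Nat.succ_ne_zero n)
              push_cast at h1
              exact h1
            push_cast
            field_simp]
          exact Complex.exp_pi_mul_I
        obtain ⟨r₂, hr₂0, hr₂⟩ := hpos ζ hζc
        have hc2 : c = -(r₂ : ℂ) := by
          have : P.eval ζ = c := by rw [← hc]; simp
          rw [this, hζm] at hr₂
          rw [hr₂]; ring
        have : (r₁ : ℂ) = -(r₂ : ℂ) := by rw [← hc1, hc2]
        have hr12 : r₁ = -r₂ := by exact_mod_cast this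
        have hr10 : r₁ = 0 := le_antisymm (by linarith) hr₁0
        apply h0
        have : P.coeff 0 = c := by rw [← hc]; simp
        rw [this, hc1, hr10]; simp
      have hdegpos : 0 < P.degree := by
        rw [← Polynomial.natDegree_pos_iff_degree_pos]
        omega
      obtain ⟨ρ, hρroot⟩ := Complex.exists_root hdegpos
      have hρroot' : P.eval ρ = 0 := hρroot
      have hρ0 : ρ ≠ 0 := by
        intro h
        rw [h] at hρroot'
        rw [← Polynomial.coeff_zero_eq_eval_zero] at hρroot'
        exact h0 hρroot'
      have hcρ0 : (starRingEnd ℂ) ρ ≠ 0 := by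
        simpa using hρ0
      set ρ' : ℂ := ((starRingEnd ℂ) ρ)⁻¹ with hρ'
      have hρ'root : P.eval ρ' = 0 := by
        rw [← hsym]; exact starPoly_root _ P hdeg' hρ0 hρroot'
      have hdvd : (Polynomial.X - Polynomial.C ρ) * (Polynomial.X - Polynomial.C ρ') ∣ P := by
        by_cases hrr : ρ' = ρ
        · have hρc : ‖ρ‖ = 1 := by
            have h1 : ρ * (starRingEnd ℂ) ρ = 1 := by
              have h2 : ρ' * (starRingEnd ℂ) ρ = 1 := inv_mul_cancel₀ hcρ0
              rw [hrr] at h2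
              exact h2
            have := congrArg (‖·‖) h1
            rw [norm_mul, Complex.norm_conj, norm_one] at this
            have h2 : ‖ρ‖ ^ 2 = 1 := by rw [sq]; exact this
            nlinarith [norm_nonneg ρ]
          have hd' := deriv_zero_of_circle_root (n+1) P hpos hρc hρroot'
          obtain ⟨Q, hQ⟩ := Polynomial.dvd_iff_isRoot.mpr hρroot
          have hQρ : Q.eval ρ = 0 := by
            have hder := congrArg Polynomial.derivative hQ
            rw [Polynomial.derivative_mul] at hder
            simp only [Polynomial.derivative_sub, Polynomial.derivative_X,
              Polynomial.derivative_C, sub_zero, one_mul] at hder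
            have := congrArg (Polynomial.eval ρ) hder
            simp only [Polynomial.eval_add, Polynomial.eval_mul, Polynomial.eval_sub,
              Polynomial.eval_X, Polynomial.eval_C, sub_self, zero_mul, add_zero,
              mul_zero] at this
            rw [hd'] at this
            linear_combination -this
          obtain ⟨R, hR⟩ := Polynomial.dvd_iff_isRoot.mpr hQρ
          rw [hrr]
          exact ⟨R, by rw [hQ, hR]; ring⟩
        · have hcop : IsCoprime (Polynomial.X - Polynomial.C ρ) (Polynomial.X - Polynomial.C ρ') :=
            Polynomial.isCoprime_X_sub_C_of_isUnit_sub
              (IsUnit.mk0 _ (sub_ne_zero.mpr (Ne.symm hrr)))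
          exact hcop.mul_dvd (Polynomial.dvd_iff_isRoot.mpr hρroot)
            (Polynomial.dvd_iff_isRoot.mpr hρ'root)
      obtain ⟨P₁, hP₁⟩ := hdvd
      set κ : ℂ := -((starRingEnd ℂ) ρ) with hκ
      have hκ0 : κ ≠ 0 := by simpa [hκ] using hcρ0
      set P₂ : Polynomial ℂ := Polynomial.C κ⁻¹ * P₁ with hP₂def
      have hP₁2 : P₁ = Polynomial.C κ * P₂ := by
        rw [hP₂def, ← mul_assoc, ← Polynomial.C_mul, mul_inv_cancel₀ hκ0, Polynomial.C_1, one_mul]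
      have hP₁0 : P₁ ≠ 0 := by
        intro h; exact hP0 (by rw [hP₁, h, mul_zero])
      have hP₂0 : P₂ ≠ 0 := by
        intro h
        rw [hP₁2, h, mul_zero] at hP₁0
        exact hP₁0 rfl
      have hdegP₂ : P₂.natDegree ≤ 2*n := by
        have hq1 : (Polynomial.X - Polynomial.C ρ : Polynomial ℂ) ≠ 0 := Polynomial.X_sub_C_ne_zero ρ
        have hq2 : (Polynomial.X - Polynomial.C ρ' : Polynomial ℂ) ≠ 0 := Polynomial.X_sub_C_ne_zero ρ'
        have h12 : (Polynomial.X - Polynomial.C ρ) * (Polynomial.X - Polynomial.C ρ') ≠ 0 :=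
          mul_ne_zero hq1 hq2
        have hnd1 := Polynomial.natDegree_mul h12 hP₁0
        rw [← hP₁] at hnd1
        have hnd2 := Polynomial.natDegree_mul hq1 hq2
        simp only [Polynomial.natDegree_X_sub_C] at hnd2
        have hndP₂ : P₂.natDegree = P₁.natDegree := by
          rw [hP₂def]
          exact Polynomial.natDegree_C_mul (inv_ne_zero hκ0)
        omega
      have hfact : ∀ z : ℂ, ‖z‖ = 1 →
          P.eval z = z * ((Complex.normSq (z - ρ) : ℝ) : ℂ) * P₂.eval z := by
        intro z hz
        have hz0 : z ≠ 0 := circle_ne_zero hz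
        have hev : P.eval z = (z - ρ) * (z - ρ') * P₁.eval z := by rw [hP₁]; simp
        have hconjz : (starRingEnd ℂ) z = z⁻¹ := circle_conj_eq_inv hz
        have hquad : (z - ρ) * (z - ρ') = z * ((Complex.normSq (z - ρ) : ℝ) : ℂ) * κ⁻¹ := by
          rw [← Complex.mul_conj (z - ρ)]
          rw [_root_.map_sub, hconjz, hρ', hκ]
          field_simp
          ring
        rw [hev, hquad, hP₁2]
        simp only [Polynomial.eval_mul, Polynomial.eval_C]
        field_simp
      have hposP₂ : ∀ z : ℂ, ‖z‖ = 1 → ∃ r : ℝ, 0 ≤ r ∧ P₂.eval z = (r:ℂ) * z ^ n := by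
        have hgen : ∀ z : ℂ, ‖z‖ = 1 → z ≠ ρ → ∃ r : ℝ, 0 ≤ r ∧ P₂.eval z = (r:ℂ) * z ^ n := by
          intro z hz hzρ
          obtain ⟨r, hr0, hr⟩ := hpos z hz
          have hnsq : Complex.normSq (z - ρ) ≠ 0 := by
            simpa [Complex.normSq_eq_zero, sub_eq_zero] using hzρ
          have hnsqpos : 0 < Complex.normSq (z - ρ) :=
            lt_of_le_of_ne (Complex.normSq_nonneg _) (Ne.symm hnsq)
          refine ⟨r / Complex.normSq (z - ρ), div_nonneg hr0 (le_of_lt hnsqpos), ?_⟩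
          have hz0 : z ≠ 0 := circle_ne_zero hz
          have heq := (hfact z hz).symm.trans hr
          -- z * nsq * P₂.eval z = r * z^(n+1)
          have hcast : ((Complex.normSq (z - ρ) : ℝ) : ℂ) ≠ 0 := by exact_mod_cast hnsq
          apply mul_left_cancel₀ (mul_ne_zero hz0 hcast)
          rw [heq, Complex.ofReal_div]
          field_simp
          ring
        intro z hz
        by_cases hzρ : z = ρ
        · -- continuity argument at the exceptional point
          subst hzρ
          set ψ : ℂ → ℂ := fun w => P₂.eval w * ((starRingEnd ℂ) w) ^ n with hψ
          have hψcont : Continuous ψ := by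
            apply Continuous.mul P₂.continuous
            exact (Complex.continuous_conj).pow n
          set zk : ℕ → ℂ := fun k => z * Complex.exp (Complex.I * ((1/((k:ℝ)+1) : ℝ) : ℂ)) with hzk
          have hzkcirc : ∀ k, ‖zk k‖ = 1 := by
            intro k
            rw [hzk]
            simp only [norm_mul, hz, one_mul, Complex.norm_exp]
            rw [show Complex.I * ((1/((k:ℝ)+1) : ℝ) : ℂ) = ((1/((k:ℝ)+1) : ℝ) : ℂ) * Complex.I by ring]
            simp
          have hzkne : ∀ k, zk k ≠ z := by
            intro k hk
            rw [hzk] at hk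
            simp only at hk
            have hz0 : z ≠ 0 := circle_ne_zero hz
            have hexp1 : Complex.exp (Complex.I * ((1/((k:ℝ)+1) : ℝ) : ℂ)) = 1 := by
              have := mul_left_cancel₀ hz0 (hk.trans (mul_one z).symm)
              exact this
            rw [Complex.exp_eq_one_iff] at hexp1
            obtain ⟨nn, hnn⟩ := hexp1
            have hre : (1/((k:ℝ)+1) : ℝ) = nn * (2*Real.pi) := by
              have h1' : ((1/((k:ℝ)+1) : ℝ) : ℂ) = ((nn * (2*Real.pi) : ℝ) : ℂ) := by
                apply mul_left_cancel₀ Complex.I_ne_zero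
                rw [hnn]; push_cast; ring
              exact_mod_cast h1'
            have hk1 : (0:ℝ) < 1/((k:ℝ)+1) := by positivity
            have hk2 : (1:ℝ)/((k:ℝ)+1) ≤ 1 := by
              rw [div_le_one (by positivity)]; simp
            have hpi : (2:ℝ)*Real.pi > 6 := by have := Real.pi_gt_three; linarith
            rcases lt_trichotomy nn 0 with h|h|h
            · have : (nn:ℝ) ≤ -1 := by exact_mod_cast (by omega : nn ≤ -1)
              nlinarith
            · rw [h] at hre; simp at hre; linarith
            · have : (1:ℝ) ≤ (nn:ℝ) := by exact_mod_cast h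
              nlinarith
          have htend : Filter.Tendsto zk Filter.atTop (nhds z) := by
            have t1 : Filter.Tendsto (fun k : ℕ => (1/((k:ℝ)+1) : ℝ)) Filter.atTop (nhds 0) :=
              tendsto_one_div_add_atTop_nhds_zero_nat
            have t2 : Filter.Tendsto (fun k : ℕ => ((1/((k:ℝ)+1) : ℝ) : ℂ)) Filter.atTop (nhds 0) := by
              have := (Complex.continuous_ofReal.tendsto 0).comp t1
              simpa [Function.comp_def] using this
            have t3 : Filter.Tendsto (fun k : ℕ => Complex.I * ((1/((k:ℝ)+1) : ℝ) : ℂ))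
                Filter.atTop (nhds 0) := by
              simpa using t2.const_mul Complex.I
            have t4 : Filter.Tendsto (fun k : ℕ => Complex.exp (Complex.I * ((1/((k:ℝ)+1) : ℝ) : ℂ)))
                Filter.atTop (nhds 1) := by
              have := (Complex.continuous_exp.tendsto 0).comp t3
              simpa [Function.comp_def] using this
            have t5 := t4.const_mul z
            simpa [hzk] using t5
          have hS : IsClosed {w : ℂ | w.im = 0 ∧ 0 ≤ w.re} := by
            apply IsClosed.inter
            · exact isClosed_eq Complex.continuous_im continuous_const
            · exact isClosed_le continuous_const Complex.continuous_re
          have hmem : ∀ k, ψ (zk k) ∈ {w : ℂ | w.im = 0 ∧ 0 ≤ w.re} := by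
            intro k
            obtain ⟨r, hr0, hr⟩ := hgen (zk k) (hzkcirc k) (hzkne k)
            have hcm : zk k * (starRingEnd ℂ) (zk k) = 1 := circle_mul_conj (hzkcirc k)
            have : ψ (zk k) = (r : ℂ) := by
              rw [hψ]
              simp only
              rw [hr]
              calc (r:ℂ) * (zk k) ^ n * ((starRingEnd ℂ) (zk k)) ^ n
                  = (r:ℂ) * ((zk k) * (starRingEnd ℂ) (zk k)) ^ n := by rw [mul_pow]; ring
                _ = (r:ℂ) := by rw [hcm, one_pow, mul_one]
            rw [this]
            constructor <;> simp [hr0]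
          have hlim : ψ z ∈ {w : ℂ | w.im = 0 ∧ 0 ≤ w.re} := by
            apply hS.mem_of_tendsto ((hψcont.tendsto z).comp htend)
            exact Filter.Eventually.of_forall hmem
          refine ⟨(ψ z).re, hlim.2, ?_⟩
          have hψz : ψ z = ((ψ z).re : ℂ) := by
            apply Complex.ext <;> simp [hlim.1]
          have hcm : z * (starRingEnd ℂ) z = 1 := circle_mul_conj hz
          calc P₂.eval z = P₂.eval z * ((z * (starRingEnd ℂ) z) ^ n) := by rw [hcm, one_pow, mul_one]
            _ = ψ z * z ^ n := by rw [hψ]; simp only; rw [mul_pow]; ring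
            _ = ((ψ z).re : ℂ) * z ^ n := by rw [← hψz]
        · exact hgen z hz hzρ
      obtain ⟨h₁, hdegh₁, hh₁⟩ := ih P₂ hdegP₂ hposP₂
      refine ⟨(Polynomial.X - Polynomial.C ρ) * h₁, ?_, ?_⟩
      · refine le_trans (Polynomial.natDegree_mul_le) ?_
        simp only [Polynomial.natDegree_X_sub_C]
        omega
      · intro z hz
        rw [hfact z hz, hh₁ z hz]
        simp only [Polynomial.eval_mul, Polynomial.eval_sub, Polynomial.eval_X,
          Polynomial.eval_C, _root_.map_mul, _root_.map_sub]
        rw [show ((Complex.normSq (z - ρ) : ℝ) : ℂ) = (z - ρ) * (starRingEnd ℂ) (z - ρ) from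
          (Complex.mul_conj (z - ρ)).symm]
        rw [_root_.map_sub, pow_succ]
        ring

lemma zpow_toNat_eq {z : ℂ} (hz : z ≠ 0) (M : ℕ) {k : ℤ} (hk : k ∈ Finset.Icc (-(M:ℤ)) M) :
    z ^ (((M:ℤ) - k).toNat) = z ^ (M:ℕ) * z ^ (-k) := by
  have hk' := Finset.mem_Icc.mp hk
  have h1 : ((((M:ℤ) - k).toNat : ℤ)) = (M:ℤ) - k := Int.toNat_of_nonneg (by omega)
  calc z ^ (((M:ℤ) - k).toNat) = z ^ (((((M:ℤ) - k).toNat : ℤ))) := (zpow_natCast _ _).symm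
    _ = z ^ ((M:ℤ) + (-k)) := by rw [h1, sub_eq_add_neg]
    _ = z ^ (M:ℕ) * z ^ (-k) := by rw [zpow_add₀ hz, zpow_natCast]

lemma trig_unique (M : ℕ) (c d : ℤ → ℂ)
    (h : ∀ z : ℂ, ‖z‖ = 1 → ∑ k ∈ Finset.Icc (-(M:ℤ)) (M:ℤ), c k * z ^ (-k)
      = ∑ k ∈ Finset.Icc (-(M:ℤ)) (M:ℤ), d k * z ^ (-k)) :
    ∀ k ∈ Finset.Icc (-(M:ℤ)) (M:ℤ), c k = d k := by
  set R : Polynomial ℂ := ∑ k ∈ Finset.Icc (-(M:ℤ)) (M:ℤ),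
    Polynomial.C (c k - d k) * Polynomial.X ^ (((M:ℤ) - k).toNat) with hRdef
  have hR : R = 0 := by
    apply poly_eq_of_circle ∅ Set.finite_empty
    intro z hz _
    have hz0 : z ≠ 0 := circle_ne_zero hz
    rw [Polynomial.eval_finset_sum]
    simp only [Polynomial.eval_mul, Polynomial.eval_C, Polynomial.eval_pow, Polynomial.eval_X,
      Polynomial.eval_zero]
    have : ∀ k ∈ Finset.Icc (-(M:ℤ)) (M:ℤ),
        (c k - d k) * z ^ (((M:ℤ) - k).toNat) = z ^ (M:ℕ) * (c k * z ^ (-k) - d k * z ^ (-k)) := by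
      intro k hk
      rw [zpow_toNat_eq hz0 M hk]
      ring
    rw [Finset.sum_congr rfl this, ← Finset.mul_sum, Finset.sum_sub_distrib, h z hz, sub_self,
      mul_zero]
  intro k hk
  have hk' := Finset.mem_Icc.mp hk
  have hco := congrArg (fun p => Polynomial.coeff p (((M:ℤ) - k).toNat)) hR
  simp only [hRdef, Polynomial.finset_sum_coeff, Polynomial.coeff_zero] at hco
  rw [Finset.sum_eq_single k] at hco
  · simp only [Polynomial.coeff_C_mul, Polynomial.coeff_X_pow] at hco
    norm_num at hco
    exact sub_eq_zero.mp hco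
  · intro b hb hbk
    have hb' := Finset.mem_Icc.mp hb
    simp only [Polynomial.coeff_C_mul, Polynomial.coeff_X_pow]
    rw [if_neg, mul_zero]
    intro hcon
    apply hbk
    have e1 : ((((M:ℤ) - b).toNat : ℤ)) = (M:ℤ) - b := Int.toNat_of_nonneg (by omega)
    have e2 : ((((M:ℤ) - k).toNat : ℤ)) = (M:ℤ) - k := Int.toNat_of_nonneg (by omega)
    omega
  · intro hcon
    exact absurd hk hcon

lemma trace_formula (M : ℕ) (Q : Matrix (Fin (M+1)) (Fin (M+1)) ℂ) (k : ℤ) :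
    (elemToeplitz M k * Q).trace
      = ∑ i : Fin (M+1), ∑ j : Fin (M+1), (if (j:ℤ) - (i:ℤ) = k then Q j i else 0) := by
  rw [Matrix.trace]
  apply Finset.sum_congr rfl
  intro i _
  rw [Matrix.diag_apply, Matrix.mul_apply]
  apply Finset.sum_congr rfl
  intro j _
  simp only [elemToeplitz, Matrix.of_apply, ite_mul, one_mul, zero_mul]

lemma sum_trace (M : ℕ) (Q : Matrix (Fin (M+1)) (Fin (M+1)) ℂ) (z : ℂ) :
    ∑ k ∈ Finset.Icc (-(M:ℤ)) (M:ℤ), (elemToeplitz M k * Q).trace * z ^ (-k)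
      = ∑ a : Fin (M+1), ∑ b : Fin (M+1), Q a b * z ^ ((b:ℤ) - (a:ℤ)) := by
  have h1 : ∀ k ∈ Finset.Icc (-(M:ℤ)) (M:ℤ), (elemToeplitz M k * Q).trace * z ^ (-k)
      = ∑ i : Fin (M+1), ∑ j : Fin (M+1),
        (if (j:ℤ) - (i:ℤ) = k then Q j i * z ^ (-k) else 0) := by
    intro k _
    rw [trace_formula, Finset.sum_mul]
    apply Finset.sum_congr rfl
    intro i _
    rw [Finset.sum_mul]
    apply Finset.sum_congr rfl
    intro j _
    rw [ite_mul, zero_mul]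
  have h2 : ∀ i j : Fin (M+1), ∑ k ∈ Finset.Icc (-(M:ℤ)) (M:ℤ),
      (if (j:ℤ) - (i:ℤ) = k then Q j i * z ^ (-k) else 0) = Q j i * z ^ ((i:ℤ) - (j:ℤ)) := by
    intro i j
    rw [Finset.sum_eq_single ((j:ℤ) - (i:ℤ))]
    · rw [if_pos rfl]
      congr 2
      ring
    · intro b _ hb
      rw [if_neg (fun h => hb h.symm)]
    · intro hx
      exfalso
      apply hx
      rw [Finset.mem_Icc]
      have hi := i.isLt
      have hj := j.isLt
      omega
  calc ∑ k ∈ Finset.Icc (-(M:ℤ)) (M:ℤ), (elemToeplitz M k * Q).trace * z ^ (-k)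
      = ∑ i : Fin (M+1), ∑ j : Fin (M+1), ∑ k ∈ Finset.Icc (-(M:ℤ)) (M:ℤ),
          (if (j:ℤ) - (i:ℤ) = k then Q j i * z ^ (-k) else 0) := by
        rw [Finset.sum_congr rfl h1, Finset.sum_comm]
        apply Finset.sum_congr rfl
        intro i _
        rw [Finset.sum_comm]
    _ = ∑ i : Fin (M+1), ∑ j : Fin (M+1), Q j i * z ^ ((i:ℤ) - (j:ℤ)) := by
        apply Finset.sum_congr rfl
        intro i _
        apply Finset.sum_congr rfl
        intro j _
        exact h2 i j
    _ = ∑ a : Fin (M+1), ∑ b : Fin (M+1), Q a b * z ^ ((b:ℤ) - (a:ℤ)) := Finset.sum_comm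

lemma conj_zpow_circle {z : ℂ} (hz : ‖z‖ = 1) (a : ℕ) :
    (starRingEnd ℂ) (z ^ a) = z ^ (-(a:ℤ)) := by
  rw [_root_.map_pow, circle_conj_eq_inv hz, _root_.zpow_neg, zpow_natCast, inv_pow]

lemma build (M : ℕ) (g : ℤ → ℂ)
    (hg : ∀ z : ℂ, ‖z‖ = 1 → ∃ r : ℝ, 0 ≤ r ∧
      ∑ k ∈ Finset.Icc (-(M:ℤ)) (M:ℤ), g k * z ^ (-k) = (r : ℂ)) :
    ∃ Q : Matrix (Fin (M+1)) (Fin (M+1)) ℂ, Q.PosSemidef ∧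
      ∀ k ∈ Finset.Icc (-(M:ℤ)) (M:ℤ), g k = (elemToeplitz M k * Q).trace := by
  set P : Polynomial ℂ := ∑ k ∈ Finset.Icc (-(M:ℤ)) (M:ℤ),
    Polynomial.C (g k) * Polynomial.X ^ (((M:ℤ) - k).toNat) with hPdef
  have hPeval : ∀ z : ℂ, z ≠ 0 → P.eval z
      = z ^ M * ∑ k ∈ Finset.Icc (-(M:ℤ)) (M:ℤ), g k * z ^ (-k) := by
    intro z hz0
    rw [hPdef, Polynomial.eval_finset_sum, Finset.mul_sum]
    apply Finset.sum_congr rfl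
    intro k hk
    simp only [Polynomial.eval_mul, Polynomial.eval_C, Polynomial.eval_pow, Polynomial.eval_X]
    rw [zpow_toNat_eq hz0 M hk]
    ring
  have hdegP : P.natDegree ≤ 2 * M := by
    rw [hPdef]
    apply Polynomial.natDegree_sum_le_of_forall_le
    intro k hk
    have hk' := Finset.mem_Icc.mp hk
    refine le_trans (Polynomial.natDegree_C_mul_le _ _) ?_
    rw [Polynomial.natDegree_X_pow]
    omega
  have hposP : ∀ z : ℂ, ‖z‖ = 1 → ∃ r : ℝ, 0 ≤ r ∧ P.eval z = (r : ℂ) * z ^ M := by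
    intro z hz
    obtain ⟨r, hr0, hr⟩ := hg z hz
    exact ⟨r, hr0, by rw [hPeval z (circle_ne_zero hz), hr]; ring⟩
  obtain ⟨h, hdegh, hh⟩ := fr M P hdegP hposP
  set a : Fin (M+1) → ℂ := fun i => h.coeff i with ha
  set Q : Matrix (Fin (M+1)) (Fin (M+1)) ℂ :=
    Matrix.of (fun i j => (starRingEnd ℂ) (a i) * a j) with hQdef
  have heval_h : ∀ z : ℂ, ‖z‖ = 1 → ∑ b : Fin (M+1), a b * z ^ ((b:ℕ):ℤ) = h.eval z := by
    intro z hz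
    rw [eval_eq_sum_range_zpow hdegh z, ← Fin.sum_univ_eq_sum_range]
    apply Finset.sum_congr rfl
    intro b _
    rw [zpow_natCast]
  have heval_conj : ∀ z : ℂ, ‖z‖ = 1 →
      ∑ b : Fin (M+1), (starRingEnd ℂ) (a b) * z ^ (-((b:ℕ):ℤ)) = (starRingEnd ℂ) (h.eval z) := by
    intro z hz
    rw [eval_eq_sum_range_zpow hdegh z, _root_.map_sum, ← Fin.sum_univ_eq_sum_range]
    apply Finset.sum_congr rfl
    intro b _
    rw [_root_.map_mul, conj_zpow_circle hz]
  refine ⟨Q, Matrix.PosSemidef.of_dotProduct_mulVec_nonneg ?_ ?_, ?_⟩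
  · -- Hermitian
    ext i j
    simp only [Matrix.conjTranspose_apply, hQdef, Matrix.of_apply, star_mul']
    simp only [Complex.star_def, Complex.conj_conj]
    ring
  · -- nonnegativity of the quadratic form
    intro x
    set S : ℂ := ∑ j : Fin (M+1), a j * x j with hS
    have hform : dotProduct (star x) (Q.mulVec x) = star S * S := by
      rw [dotProduct]
      have hterm : ∀ i : Fin (M+1), (star x) i * (Q.mulVec x) i
          = (star (x i) * (starRingEnd ℂ) (a i)) * S := by
        intro i
        rw [Matrix.mulVec, dotProduct]
        simp only [Pi.star_apply, hQdef, Matrix.of_apply]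
        rw [hS, Finset.mul_sum, Finset.mul_sum]
        apply Finset.sum_congr rfl
        intro j _
        ring
      rw [Finset.sum_congr rfl (fun i _ => hterm i), ← Finset.sum_mul]
      congr 1
      rw [hS, star_sum]
      apply Finset.sum_congr rfl
      intro j _
      rw [star_mul']
      simp only [Complex.star_def]
      ring
    rw [hform]
    exact star_mul_self_nonneg S
  · -- trace identities
    apply trig_unique M g (fun k => (elemToeplitz M k * Q).trace)
    intro z hz
    have hz0 : z ≠ 0 := circle_ne_zero hz
    rw [sum_trace M Q z]
    have hL : ∑ k ∈ Finset.Icc (-(M:ℤ)) (M:ℤ), g k * z ^ (-k)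
        = h.eval z * (starRingEnd ℂ) (h.eval z) := by
      have h1 := hh z hz
      rw [hPeval z hz0] at h1
      exact mul_left_cancel₀ (pow_ne_zero M hz0) h1
    rw [hL]
    have hR : ∑ a' : Fin (M+1), ∑ b : Fin (M+1), Q a' b * z ^ ((b:ℤ) - (a':ℤ))
        = ((starRingEnd ℂ) (h.eval z)) * h.eval z := by
      rw [← heval_conj z hz, ← heval_h z hz, Finset.sum_mul_sum]
      apply Finset.sum_congr rfl
      intro i _
      apply Finset.sum_congr rfl
      intro j _
      rw [hQdef]
      simp only [Matrix.of_apply]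
      rw [show ((j:ℕ):ℤ) - ((i:ℕ):ℤ) = -((i:ℕ):ℤ) + ((j:ℕ):ℤ) by ring, zpow_add₀ hz0]
      ring
    rw [hR]
    ring

lemma conj_trig_sum (M : ℕ) (q : ℤ → ℂ) (hsymm : ∀ k : ℤ, q (-k) = star (q k))
    {z : ℂ} (hz : ‖z‖ = 1) :
    (starRingEnd ℂ) (∑ k ∈ Finset.Icc (-(M:ℤ)) (M:ℤ), q k * z ^ (-k))
      = ∑ k ∈ Finset.Icc (-(M:ℤ)) (M:ℤ), q k * z ^ (-k) := by
  have hz0 : z ≠ 0 := circle_ne_zero hz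
  rw [_root_.map_sum]
  apply Finset.sum_nbij' (i := fun k => -k) (j := fun k => -k)
  · intro k hk; have := Finset.mem_Icc.mp hk; rw [Finset.mem_Icc]; omega
  · intro k hk; have := Finset.mem_Icc.mp hk; rw [Finset.mem_Icc]; omega
  · intro k _; omega
  · intro k _; omega
  · intro k _
    rw [_root_.map_mul, hsymm k, Complex.star_def]
    congr 1
    rw [_root_.map_zpow₀, circle_conj_eq_inv hz, neg_neg, _root_.inv_zpow, ← _root_.zpow_neg, neg_neg]

lemma theta_split (M : ℕ) (θ : ℂ) (q : ℤ → ℂ) (z : ℂ) :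
    ∑ k ∈ Finset.Icc (-(M:ℤ)) (M:ℤ), ((if k = 0 then θ else 0) + q k) * z ^ (-k)
      = θ + ∑ k ∈ Finset.Icc (-(M:ℤ)) (M:ℤ), q k * z ^ (-k) := by
  have hsplit : ∀ k ∈ Finset.Icc (-(M:ℤ)) (M:ℤ),
      ((if k = 0 then θ else 0) + q k) * z ^ (-k)
        = (if k = 0 then θ else 0) * z ^ (-k) + q k * z ^ (-k) := fun k _ => by ring
  rw [Finset.sum_congr rfl hsplit, Finset.sum_add_distrib]
  congr 1
  rw [Finset.sum_eq_single_of_mem 0 (by rw [Finset.mem_Icc]; omega)]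
  · simp
  · intro b _ hb
    rw [if_neg hb, zero_mul]


/-- Semidefinite representability of the peak power.
Let `q(z) = ∑_{k=-2N}^{2N} q_k z^{-k}` be a trigonometric polynomial with
`q_{-k} = conj (q_k)` and `q_0 = 0`. Then `θ ≥ max_{|z|=1} |q(z)|` iff there
exist positive semidefinite Hermitian matrices `Q₁, Q₂` of size `2N+1` with
`θ = tr(Λ₀ Q₁)`, `q_k = tr(Λ_k Q₁)` for `k ≠ 0`, `θ = tr(Λ₀ Q₂)`, and
`-q_k = tr(Λ_k Q₂)` for `k ≠ 0`. -/
theorem peak_power_semidefinite_representation (N : ℕ) (hN : 1 ≤ N)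
    (q : ℤ → ℂ) (hsymm : ∀ k : ℤ, q (-k) = star (q k)) (hq0 : q 0 = 0)
    (θ : ℝ) :
    (∀ z : ℂ, ‖z‖ = 1 →
        ‖∑ k ∈ Finset.Icc (-(2 * N : ℤ)) (2 * N : ℤ),
          q k * z ^ (-k)‖ ≤ θ) ↔
    (∃ Q₁ Q₂ : Matrix (Fin (2 * N + 1)) (Fin (2 * N + 1)) ℂ,
        Q₁.PosSemidef ∧ Q₂.PosSemidef ∧
        (θ : ℂ) = (elemToeplitz (2 * N) 0 * Q₁).trace ∧
        (∀ k ∈ Finset.Icc (-(2 * N : ℤ)) (2 * N : ℤ), k ≠ 0 →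
          q k = (elemToeplitz (2 * N) k * Q₁).trace) ∧
        (θ : ℂ) = (elemToeplitz (2 * N) 0 * Q₂).trace ∧
        (∀ k ∈ Finset.Icc (-(2 * N : ℤ)) (2 * N : ℤ), k ≠ 0 →
          -q k = (elemToeplitz (2 * N) k * Q₂).trace)) := by
  have hMcast : ((2 * N : ℕ) : ℤ) = (2 * N : ℤ) := by push_cast; ring
  constructor
  · -- forward direction
    intro hle
    have hqz : ∀ z : ℂ, ‖z‖ = 1 →
        ∃ x : ℝ, |x| ≤ θ ∧ ∑ k ∈ Finset.Icc (-(2 * N : ℤ)) (2 * N : ℤ), q k * z ^ (-k) = (x:ℂ) := by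
      intro z hz
      set w : ℂ := ∑ k ∈ Finset.Icc (-(2 * N : ℤ)) (2 * N : ℤ), q k * z ^ (-k) with hw
      have hconj : (starRingEnd ℂ) w = w := by
        have := conj_trig_sum (2*N) q hsymm hz
        rw [hMcast] at this
        exact this
      have him : w.im = 0 := by
        have := congrArg Complex.im hconj
        simp only [Complex.conj_im] at this
        linarith
      refine ⟨w.re, ?_, ?_⟩
      · have h1 := hle z hz
        rw [← hw] at h1
        calc |w.re| ≤ ‖w‖ := Complex.abs_re_le_norm w
          _ ≤ θ := h1
      · exact Complex.ext rfl (by simp [him])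
    -- build the two matrices
    have hbuild : ∀ s : ℝ, s = 1 ∨ s = -1 →
        ∃ Q : Matrix (Fin (2*N+1)) (Fin (2*N+1)) ℂ, Q.PosSemidef ∧
        ∀ k ∈ Finset.Icc (-((2*N : ℕ):ℤ)) ((2*N : ℕ):ℤ),
          (if k = 0 then (θ:ℂ) else 0) + (s:ℂ) * q k = (elemToeplitz (2*N) k * Q).trace := by
      intro s hs
      apply build (2*N) (fun k => (if k = 0 then (θ:ℂ) else 0) + (s:ℂ) * q k)
      intro z hz
      obtain ⟨x, hx, hxe⟩ := hqz z hz
      have habs := abs_le.mp hx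
      refine ⟨θ + s * x, by rcases hs with h|h <;> rw [h] <;> simp <;> linarith, ?_⟩
      have := theta_split (2*N) (θ:ℂ) (fun k => (s:ℂ) * q k) z
      rw [this, Finset.sum_congr rfl (fun k _ => mul_assoc (s:ℂ) (q k) (z^(-k))),
        ← Finset.mul_sum, hMcast, hxe]
      push_cast
      ring
    obtain ⟨Q₁, hps₁, htr₁⟩ := hbuild 1 (Or.inl rfl)
    obtain ⟨Q₂, hps₂, htr₂⟩ := hbuild (-1) (Or.inr rfl)
    have h0mem : (0:ℤ) ∈ Finset.Icc (-((2*N : ℕ):ℤ)) ((2*N : ℕ):ℤ) := by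
      rw [Finset.mem_Icc]; omega
    refine ⟨Q₁, Q₂, hps₁, hps₂, ?_, ?_, ?_, ?_⟩
    · have := htr₁ 0 h0mem
      rw [if_pos rfl, hq0] at this
      simpa using this
    · intro k hk hk0
      rw [hMcast] at htr₁
      have := htr₁ k hk
      rw [if_neg hk0] at this
      simpa using this
    · have := htr₂ 0 h0mem
      rw [if_pos rfl, hq0] at this
      simpa using this
    · intro k hk hk0
      rw [hMcast] at htr₂
      have := htr₂ k hk
      rw [if_neg hk0] at this
      push_cast at this
      rw [← this]
      ring
  · -- backward direction
    rintro ⟨Q₁, Q₂, hps₁, hps₂, ht0₁, htk₁, ht0₂, htk₂⟩ z hz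
    have hz0 : z ≠ 0 := circle_ne_zero hz
    set v : Fin (2*N+1) → ℂ := fun i => z ^ ((i : ℕ)) with hv
    have hquad : ∀ Q : Matrix (Fin (2*N+1)) (Fin (2*N+1)) ℂ,
        dotProduct (star v) (Q.mulVec v)
          = ∑ a : Fin (2*N+1), ∑ b : Fin (2*N+1), Q a b * z ^ ((b:ℤ) - (a:ℤ)) := by
      intro Q
      rw [dotProduct]
      apply Finset.sum_congr rfl
      intro i _
      rw [Matrix.mulVec, dotProduct, Finset.mul_sum]
      apply Finset.sum_congr rfl
      intro j _
      simp only [Pi.star_apply, hv, Complex.star_def]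
      rw [conj_zpow_circle hz]
      rw [show ((j:ℕ):ℤ) - ((i:ℕ):ℤ) = -((i:ℕ):ℤ) + ((j:ℕ):ℤ) by ring, zpow_add₀ hz0,
        zpow_natCast]
      ring
    have key : ∀ Q : Matrix (Fin (2*N+1)) (Fin (2*N+1)) ℂ, Q.PosSemidef →
        (0:ℂ) ≤ ∑ k ∈ Finset.Icc (-((2*N:ℕ):ℤ)) ((2*N:ℕ):ℤ),
          (elemToeplitz (2*N) k * Q).trace * z ^ (-k) := by
      intro Q hQ
      rw [sum_trace (2*N) Q z, ← hquad Q]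
      exact hQ.dotProduct_mulVec_nonneg v
    set w : ℂ := ∑ k ∈ Finset.Icc (-(2 * N : ℤ)) (2 * N : ℤ), q k * z ^ (-k) with hw
    have hsum : ∀ (Q : Matrix (Fin (2*N+1)) (Fin (2*N+1)) ℂ) (s : ℂ),
        ((θ:ℂ) = (elemToeplitz (2*N) 0 * Q).trace) →
        (∀ k ∈ Finset.Icc (-(2 * N : ℤ)) (2 * N : ℤ), k ≠ 0 →
          s * q k = (elemToeplitz (2*N) k * Q).trace) →
        ∑ k ∈ Finset.Icc (-((2*N:ℕ):ℤ)) ((2*N:ℕ):ℤ),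
          (elemToeplitz (2*N) k * Q).trace * z ^ (-k) = (θ:ℂ) + s * w := by
      intro Q s h1 h2
      have hterm : ∀ k ∈ Finset.Icc (-((2*N:ℕ):ℤ)) ((2*N:ℕ):ℤ),
          (elemToeplitz (2*N) k * Q).trace * z ^ (-k)
            = ((if k = 0 then (θ:ℂ) else 0) + s * q k) * z ^ (-k) := by
        intro k hk
        by_cases hk0 : k = 0
        · subst hk0
          rw [if_pos rfl, ← h1, hq0]
          ring_nf
        · rw [if_neg hk0, ← h2 k (by rwa [hMcast] at hk) hk0]
          ring_nf
      rw [Finset.sum_congr rfl hterm, theta_split (2*N) (θ:ℂ) (fun k => s * q k) z]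
      congr 1
      rw [Finset.sum_congr rfl (fun k _ => mul_assoc s (q k) (z^(-k))),
        ← Finset.mul_sum, hMcast, ← hw]
    have hpos₁ := key Q₁ hps₁
    have hpos₂ := key Q₂ hps₂
    rw [hsum Q₁ 1 ht0₁ (by intro k hk hk0; rw [one_mul]; exact htk₁ k hk hk0)] at hpos₁
    rw [hsum Q₂ (-1) ht0₂ (by intro k hk hk0; rw [neg_one_mul]; exact htk₂ k hk hk0)] at hpos₂
    rw [one_mul] at hpos₁
    rw [neg_one_mul] at hpos₂
    have h1 := Complex.le_def.mp hpos₁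
    have h2 := Complex.le_def.mp hpos₂
    simp only [Complex.zero_re, Complex.zero_im, Complex.add_re, Complex.add_im,
      Complex.ofReal_re, Complex.ofReal_im, Complex.neg_re, Complex.neg_im] at h1 h2
    have him : w.im = 0 := by linarith [h1.2]
    have hwre : w = ((w.re : ℝ) : ℂ) := Complex.ext rfl (by simp [him])
    rw [hwre, Complex.norm_real, Real.norm_eq_abs]
    apply abs_le.mpr
    constructor
    · linarith [h1.1]
    · linarith [h2.1]
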